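/- Let r(t) = A(t)/B(t) and θ(t) = C(t)/D(t) both be nonconstant. Then the polar-rational curve is not contained in any real algebraic curve: for every nonzero polynomial g ∈ ℝ[x,y] there exists t ∈ Ω such that g(r(t)·cos(θ(t)), r(t)·sin(θ(t))) ≠ 0. (Consequently, the only real algebraic curves that are rational in polar coordinates are circles centered at the origin, which force r constant, and lines through the origin, which force θ constant.) -/

import Mathlib

open Polynomial Filter

section Auxiliary


lemma ev_nmem {s : Set ℝ} (hs : s.Finite) (x₀ : ℝ) : ∀ᶠ t in nhdsWithin x₀ {x₀}ᶜ, t ∉ s := by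
  have hcl : IsClosed (s \ {x₀}) := (hs.subset (Set.diff_subset)).isClosed
  have hU : (s \ {x₀})ᶜ ∈ nhds x₀ := hcl.isOpen_compl.mem_nhds (by simp)
  filter_upwards [eventually_nhdsWithin_of_eventually_nhds (eventually_mem_set.2 hU),
    self_mem_nhdsWithin] with t ht ht0
  intro hmem
  exact ht ⟨hmem, ht0⟩

lemma ev_deriv_zero {F : ℝ → ℂ} {x₀ : ℝ}
    (h : ∀ᶠ t in nhdsWithin x₀ {x₀}ᶜ, F t = 0) :
    ∀ᶠ t in nhdsWithin x₀ {x₀}ᶜ, deriv F t = 0 := by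
  rw [eventually_iff, mem_nhdsWithin] at h
  obtain ⟨U, hUo, hx₀, hsub⟩ := h
  rw [eventually_iff, mem_nhdsWithin]
  refine ⟨U, hUo, hx₀, fun t ht => ?_⟩
  have hopen : IsOpen (U ∩ {x₀}ᶜ) := hUo.inter isClosed_singleton.isOpen_compl
  have : F =ᶠ[nhds t] fun _ => 0 :=
    eventually_of_mem (hopen.mem_nhds ht) (fun y hy => hsub hy)
  simpa using this.deriv_eq

lemma poly_ev_zero {P : Polynomial ℂ} {x₀ : ℝ}
    (h : ∀ᶠ t : ℝ in nhdsWithin x₀ {x₀}ᶜ, P.eval (t : ℂ) = 0) : P = 0 := by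
  by_contra hP
  have hroots : Set.Finite {t : ℝ | P.eval (t : ℂ) = 0} := by
    have h1 : Set.Finite {z : ℂ | P.IsRoot z} := Polynomial.finite_setOf_isRoot hP
    exact Set.Finite.preimage (fun a _ b _ hab => Complex.ofReal_injective hab) h1
  have h2 : ∀ᶠ t in nhdsWithin x₀ {x₀}ᶜ, t ∉ {t : ℝ | P.eval (t : ℂ) = 0} :=
    ev_nmem hroots x₀
  obtain ⟨t, ht1, ht2⟩ := (h.and h2).exists
  exact ht2 ht1


lemma pow_dvd_derivative {k : ℕ} {Q : Polynomial ℂ} {α : ℂ}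
    (h : (X - C α) ^ k ∣ Q) : (X - C α) ^ (k - 1) ∣ derivative Q := by
  obtain ⟨q, rfl⟩ := h
  rw [derivative_mul, derivative_pow, derivative_sub, derivative_X, derivative_C, sub_zero,
    mul_one]
  refine dvd_add (Dvd.dvd.mul_right ?_ _) (Dvd.dvd.mul_right ?_ _)
  · exact Dvd.dvd.mul_left dvd_rfl _
  · exact pow_dvd_pow _ (Nat.sub_le _ _)

lemma pow_dvd_wronskian {p r : ℕ} {P R : Polynomial ℂ} {α : ℂ}
    (hp : (X - C α) ^ p ∣ P) (hr : (X - C α) ^ r ∣ R) :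
    (X - C α) ^ (p + r - 1) ∣ P * derivative R - R * derivative P := by
  refine dvd_sub ?_ ?_
  · have h1 : (X - C α) ^ (p + (r - 1)) ∣ P * derivative R := by
      rw [pow_add]; exact mul_dvd_mul hp (pow_dvd_derivative hr)
    exact (pow_dvd_pow _ (by omega)).trans h1
  · have h1 : (X - C α) ^ (r + (p - 1)) ∣ R * derivative P := by
      rw [pow_add]; exact mul_dvd_mul hr (pow_dvd_derivative hp)
    exact (pow_dvd_pow _ (by omega)).trans h1

lemma natDegree_pos_of_derivative_ne_zero {T : Polynomial ℂ} (hT : derivative T ≠ 0) :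
    1 ≤ T.natDegree := by
  by_contra hh
  push_neg at hh
  have h0 : T.natDegree = 0 := by omega
  exact hT (by rw [eq_C_of_natDegree_eq_zero h0, derivative_C])

lemma mul_derivative_natDegree_le {S T : Polynomial ℂ} :
    (S * derivative T).natDegree ≤ S.natDegree + T.natDegree - 1 := by
  by_cases hT : derivative T = 0
  · simp [hT]
  · have h1 := natDegree_pos_of_derivative_ne_zero hT
    have h2 : (S * derivative T).natDegree ≤ S.natDegree + (T.natDegree - 1) :=
      (natDegree_mul_le).trans (by gcongr; exact natDegree_derivative_le T)
    omega

lemma wronskian_natDegree_bound {P R : Polynomial ℂ}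
    (h : P * derivative R - R * derivative P ≠ 0) :
    (P * derivative R - R * derivative P).natDegree + 1 ≤ P.natDegree + R.natDegree := by
  have hone : 1 ≤ P.natDegree + R.natDegree := by
    by_cases hR' : derivative R = 0
    · by_cases hP' : derivative P = 0
      · exact absurd (by rw [hR', hP']; ring) h
      · have := natDegree_pos_of_derivative_ne_zero hP'; omega
    · have := natDegree_pos_of_derivative_ne_zero hR'; omega
  have b1 : (P * derivative R).natDegree ≤ P.natDegree + R.natDegree - 1 :=
    mul_derivative_natDegree_le
  have b2 : (R * derivative P).natDegree ≤ P.natDegree + R.natDegree - 1 := by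
    rw [add_comm P.natDegree]; exact mul_derivative_natDegree_le
  have hb := (natDegree_sub_le (P * derivative R) (R * derivative P)).trans
    (max_le_iff.2 ⟨b1, b2⟩)
  omega

lemma alg_lemma (Cc Dc P R : Polynomial ℂ) (hDc : Dc ≠ 0) (hcop : IsCoprime Cc Dc)
    (hnc : ¬(Cc.natDegree = 0 ∧ Dc.natDegree = 0)) (hP : P ≠ 0) (hR : R ≠ 0)
    (κ : ℂ) (hκ : κ ≠ 0)
    (heq : Dc ^ 2 * (P * derivative R - R * derivative P)
      + C κ * ((derivative Cc * Dc - Cc * derivative Dc) * P * R) = 0) : False := by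
  have hCc : Cc ≠ 0 := by
    rintro rfl
    have hu : IsUnit Dc := by simpa using (isCoprime_zero_left).1 hcop
    exact hnc ⟨natDegree_zero, natDegree_eq_zero_of_isUnit hu⟩
  have hE : (derivative Cc * Dc - Cc * derivative Dc) ≠ 0 := by
    intro hE0
    have hrel : derivative Cc * Dc = Cc * derivative Dc := sub_eq_zero.1 hE0
    by_cases hd : Dc.natDegree = 0
    · have hD' : derivative Dc = 0 := by rw [eq_C_of_natDegree_eq_zero hd, derivative_C]
      have h1 : derivative Cc * Dc = 0 := by rw [hrel, hD', mul_zero]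
      have hC' : derivative Cc = 0 := by
        rcases mul_eq_zero.1 h1 with h | h
        · exact h
        · exact absurd h hDc
      exact hnc ⟨natDegree_eq_zero_of_derivative_eq_zero hC', hd⟩
    · have hD' : derivative Dc ≠ 0 := fun h0 => hd (natDegree_eq_zero_of_derivative_eq_zero h0)
      have hdvd : Dc ∣ Cc * derivative Dc := ⟨derivative Cc, by rw [← hrel]; ring⟩
      have hdvd2 : Dc ∣ derivative Dc := (hcop.symm).dvd_of_dvd_mul_left hdvd
      have hle := natDegree_le_of_dvd hdvd2 hD'
      have hlt := natDegree_derivative_lt hd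
      omega
  have hsum : Dc ^ 2 * (P * derivative R - R * derivative P)
      = C (-κ) * ((derivative Cc * Dc - Cc * derivative Dc) * P * R) := by
    rw [map_neg]; linear_combination heq
  have hRHS : C (-κ) * ((derivative Cc * Dc - Cc * derivative Dc) * P * R) ≠ 0 := by
    refine mul_ne_zero ?_ (mul_ne_zero (mul_ne_zero hE hP) hR)
    simpa using neg_ne_zero.2 hκ
  have hW : P * derivative R - R * derivative P ≠ 0 := by
    intro h0
    rw [h0, mul_zero] at hsum
    exact hRHS hsum.symm
  by_cases hd : Dc.natDegree = 0
  · have hL : (Dc ^ 2 * (P * derivative R - R * derivative P)).natDegree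
        = (P * derivative R - R * derivative P).natDegree := by
      rw [natDegree_mul (pow_ne_zero 2 hDc) hW, natDegree_pow, hd, Nat.mul_zero, Nat.zero_add]
    have hRdeg : (C (-κ) * ((derivative Cc * Dc - Cc * derivative Dc) * P * R)).natDegree
        = (derivative Cc * Dc - Cc * derivative Dc).natDegree + P.natDegree + R.natDegree := by
      rw [natDegree_mul (by simpa using neg_ne_zero.2 hκ) (mul_ne_zero (mul_ne_zero hE hP) hR),
        natDegree_C, natDegree_mul (mul_ne_zero hE hP) hR, natDegree_mul hE hP]
      ring
    have hbound := wronskian_natDegree_bound hW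
    have hdeq := congrArg natDegree hsum
    rw [hL, hRdeg] at hdeq
    omega
  · have hdpos : 0 < Dc.natDegree := Nat.pos_of_ne_zero hd
    obtain ⟨α, hα⟩ := Complex.exists_root (natDegree_pos_iff_degree_pos.1 hdpos)
    have hα' : Dc.eval α = 0 := hα
    have hm : 0 < Dc.rootMultiplicity α := (rootMultiplicity_pos hDc).2 hα
    have hCα : Cc.eval α ≠ 0 := by
      intro h0
      obtain ⟨a, b, hab⟩ := hcop
      have h4 := congrArg (eval α) hab
      simp [h0, hα'] at h4
    have hD'ne : derivative Dc ≠ 0 := fun h0 => hd (natDegree_eq_zero_of_derivative_eq_zero h0)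
    have hvD' : (derivative Dc).rootMultiplicity α = Dc.rootMultiplicity α - 1 :=
      derivative_rootMultiplicity_of_root hα
    have hvC : Cc.rootMultiplicity α = 0 := rootMultiplicity_eq_zero hCα
    have hdvdE : (X - C α) ^ (Dc.rootMultiplicity α - 1)
        ∣ (derivative Cc * Dc - Cc * derivative Dc) := by
      refine dvd_sub ?_ ?_
      · exact ((pow_dvd_pow _ (Nat.sub_le _ 1)).trans (pow_rootMultiplicity_dvd Dc α)).mul_left _
      · have h5 : (X - C α) ^ (Dc.rootMultiplicity α - 1) ∣ derivative Dc := by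
          rw [← hvD']; exact pow_rootMultiplicity_dvd _ _
        exact h5.mul_left _
    have hnotdvdE : ¬ (X - C α) ^ (Dc.rootMultiplicity α)
        ∣ (derivative Cc * Dc - Cc * derivative Dc) := by
      intro hdvd
      have h3 : (X - C α) ^ (Dc.rootMultiplicity α) ∣ derivative Cc * Dc :=
        (pow_rootMultiplicity_dvd Dc α).mul_left _
      have h2 : (X - C α) ^ (Dc.rootMultiplicity α) ∣ Cc * derivative Dc := by
        have h6 := dvd_sub h3 hdvd
        simpa using h6
      have hle := (le_rootMultiplicity_iff (mul_ne_zero hCc hD'ne)).2 h2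
      rw [rootMultiplicity_mul (mul_ne_zero hCc hD'ne), hvC, hvD'] at hle
      omega
    have hvE : (derivative Cc * Dc - Cc * derivative Dc).rootMultiplicity α
        = Dc.rootMultiplicity α - 1 := by
      have h1 := (le_rootMultiplicity_iff hE).2 hdvdE
      have h2 : (derivative Cc * Dc - Cc * derivative Dc).rootMultiplicity α
          < Dc.rootMultiplicity α := by
        by_contra hc
        push_neg at hc
        exact hnotdvdE ((pow_dvd_pow _ hc).trans (pow_rootMultiplicity_dvd _ _))
      omega
    have hWdvd : (X - C α) ^ (P.rootMultiplicity α + R.rootMultiplicity α - 1)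
        ∣ (P * derivative R - R * derivative P) :=
      pow_dvd_wronskian (pow_rootMultiplicity_dvd _ _) (pow_rootMultiplicity_dvd _ _)
    have hLHS_ne : Dc ^ 2 * (P * derivative R - R * derivative P) ≠ 0 := by
      rw [hsum]; exact hRHS
    have hvL : 2 * Dc.rootMultiplicity α + (P.rootMultiplicity α + R.rootMultiplicity α - 1)
        ≤ (Dc ^ 2 * (P * derivative R - R * derivative P)).rootMultiplicity α := by
      refine (le_rootMultiplicity_iff hLHS_ne).2 ?_
      rw [pow_add]
      refine mul_dvd_mul ?_ hWdvd
      rw [two_mul, pow_add, pow_two]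
      exact mul_dvd_mul (pow_rootMultiplicity_dvd _ _) (pow_rootMultiplicity_dvd _ _)
    have hvR : (C (-κ) * ((derivative Cc * Dc - Cc * derivative Dc) * P * R)).rootMultiplicity α
        = (Dc.rootMultiplicity α - 1) + P.rootMultiplicity α + R.rootMultiplicity α := by
      rw [rootMultiplicity_mul hRHS, rootMultiplicity_mul (mul_ne_zero (mul_ne_zero hE hP) hR),
        rootMultiplicity_mul (mul_ne_zero hE hP), hvE,
        rootMultiplicity_eq_zero (by simpa using neg_ne_zero.2 hκ)]
      ring
    rw [hsum, hvR] at hvL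
    omega

lemma eval_map_ofReal (p : Polynomial ℝ) (t : ℝ) :
    (p.map (algebraMap ℝ ℂ)).eval ((t : ℝ) : ℂ) = ((p.eval t : ℝ) : ℂ) := by
  rw [eval_map, show ((t : ℝ) : ℂ) = algebraMap ℝ ℂ t from rfl, eval₂_at_apply]
  rfl


lemma ind_lemma (Cp Dp : Polynomial ℝ) (hD : Dp ≠ 0) (hCD : IsCoprime Cp Dp)
    (hθnc : ¬(Cp.natDegree = 0 ∧ Dp.natDegree = 0)) (S : Finset ℕ) :
    ∀ (P : ℕ → Polynomial ℂ),
      (∀ᶠ t : ℝ in nhdsWithin 0 {(0:ℝ)}ᶜ,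
        ∑ n ∈ S, (P n).eval ((t : ℝ) : ℂ)
          * Complex.exp ((n : ℂ) * ((Cp.eval t / Dp.eval t : ℝ) : ℂ) * Complex.I) = 0) →
      ∀ n ∈ S, P n = 0 := by
  induction S using Finset.strongInduction with
  | _ S ih =>
  intro P hyp
  rcases S.eq_empty_or_nonempty with rfl | hSne
  · intro n hn; simp at hn
  obtain ⟨n₀, hn₀⟩ := hSne
  set Cc : Polynomial ℂ := Cp.map (algebraMap ℝ ℂ) with hCc_def
  set Dc : Polynomial ℂ := Dp.map (algebraMap ℝ ℂ) with hDc_def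
  set Ep : Polynomial ℝ := derivative Cp * Dp - Cp * derivative Dp with hEp_def
  have hDev : ∀ᶠ t : ℝ in nhdsWithin 0 {(0:ℝ)}ᶜ, Dp.eval t ≠ 0 := by
    filter_upwards [ev_nmem (finite_setOf_isRoot hD) 0] with t ht
    exact fun h0 => ht h0
  have hderiv : ∀ᶠ t : ℝ in nhdsWithin 0 {(0:ℝ)}ᶜ,
      ∑ n ∈ S, ((derivative (P n)).eval ((t : ℝ) : ℂ) * ((Dp.eval t : ℝ) : ℂ) ^ 2
        + (n : ℂ) * Complex.I * ((Ep.eval t : ℝ) : ℂ) * (P n).eval ((t : ℝ) : ℂ))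
        * Complex.exp ((n : ℂ) * ((Cp.eval t / Dp.eval t : ℝ) : ℂ) * Complex.I) = 0 := by
    filter_upwards [ev_deriv_zero hyp, hDev] with t hFt hDt
    have hθd : HasDerivAt (fun u : ℝ => Cp.eval u / Dp.eval u)
        (Ep.eval t / (Dp.eval t) ^ 2) t := by
      have h0 := (Cp.hasDerivAt t).fun_div (Dp.hasDerivAt t) hDt
      simpa [hEp_def] using h0
    have hterm : ∀ n ∈ S, HasDerivAt
        (fun u : ℝ => (P n).eval ((u : ℝ) : ℂ)
          * Complex.exp ((n : ℂ) * ((Cp.eval u / Dp.eval u : ℝ) : ℂ) * Complex.I))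
        ((derivative (P n)).eval ((t : ℝ) : ℂ)
            * Complex.exp ((n : ℂ) * ((Cp.eval t / Dp.eval t : ℝ) : ℂ) * Complex.I)
          + (P n).eval ((t : ℝ) : ℂ)
            * (Complex.exp ((n : ℂ) * ((Cp.eval t / Dp.eval t : ℝ) : ℂ) * Complex.I)
              * ((n : ℂ) * ((Ep.eval t / (Dp.eval t) ^ 2 : ℝ) : ℂ) * Complex.I))) t := by
      intro n _
      have h1 : HasDerivAt (fun u : ℝ => (P n).eval ((u : ℝ) : ℂ))
          ((derivative (P n)).eval ((t : ℝ) : ℂ)) t :=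
        ((P n).hasDerivAt ((t : ℝ) : ℂ)).comp_ofReal
      have h2 : HasDerivAt (fun u : ℝ => ((Cp.eval u / Dp.eval u : ℝ) : ℂ))
          (((Ep.eval t / (Dp.eval t) ^ 2 : ℝ) : ℂ)) t := hθd.ofReal_comp
      have h3 := (h2.const_mul ((n : ℂ))).mul_const Complex.I
      exact h1.mul h3.cexp
    have hsum := HasDerivAt.fun_sum hterm
    have hval := hsum.deriv ▸ hFt
    have hθD : ((Ep.eval t / (Dp.eval t) ^ 2 : ℝ) : ℂ) * ((Dp.eval t : ℝ) : ℂ) ^ 2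
        = ((Ep.eval t : ℝ) : ℂ) := by
      push_cast
      rw [div_mul_cancel₀]
      exact pow_ne_zero 2 (Complex.ofReal_ne_zero.2 hDt)
    calc ∑ n ∈ S, ((derivative (P n)).eval ((t : ℝ) : ℂ) * ((Dp.eval t : ℝ) : ℂ) ^ 2
          + (n : ℂ) * Complex.I * ((Ep.eval t : ℝ) : ℂ) * (P n).eval ((t : ℝ) : ℂ))
          * Complex.exp ((n : ℂ) * ((Cp.eval t / Dp.eval t : ℝ) : ℂ) * Complex.I)
        = ∑ n ∈ S, ((derivative (P n)).eval ((t : ℝ) : ℂ)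
            * Complex.exp ((n : ℂ) * ((Cp.eval t / Dp.eval t : ℝ) : ℂ) * Complex.I)
          + (P n).eval ((t : ℝ) : ℂ)
            * (Complex.exp ((n : ℂ) * ((Cp.eval t / Dp.eval t : ℝ) : ℂ) * Complex.I)
              * ((n : ℂ) * ((Ep.eval t / (Dp.eval t) ^ 2 : ℝ) : ℂ) * Complex.I)))
            * ((Dp.eval t : ℝ) : ℂ) ^ 2 := by
          refine Finset.sum_congr rfl fun n _ => ?_
          rw [← hθD]
          ring
      _ = (∑ n ∈ S, ((derivative (P n)).eval ((t : ℝ) : ℂ)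
            * Complex.exp ((n : ℂ) * ((Cp.eval t / Dp.eval t : ℝ) : ℂ) * Complex.I)
          + (P n).eval ((t : ℝ) : ℂ)
            * (Complex.exp ((n : ℂ) * ((Cp.eval t / Dp.eval t : ℝ) : ℂ) * Complex.I)
              * ((n : ℂ) * ((Ep.eval t / (Dp.eval t) ^ 2 : ℝ) : ℂ) * Complex.I))))
            * ((Dp.eval t : ℝ) : ℂ) ^ 2 := (Finset.sum_mul _ _ _).symm
      _ = 0 := by rw [hval, zero_mul]
  set Q : ℕ → Polynomial ℂ := fun n =>
    Dc ^ 2 * (P n₀ * derivative (P n) - P n * derivative (P n₀))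
      + C (((n : ℂ) - (n₀ : ℂ)) * Complex.I)
        * ((derivative Cc * Dc - Cc * derivative Dc) * P n₀ * P n) with hQ_def
  have hQn₀ : Q n₀ = 0 := by simp [hQ_def]
  have hEc_eval : ∀ t : ℝ, (derivative Cc * Dc - Cc * derivative Dc).eval ((t : ℝ) : ℂ)
      = ((Ep.eval t : ℝ) : ℂ) := by
    intro t
    rw [hEp_def]
    simp only [hCc_def, hDc_def, derivative_map, eval_sub, eval_mul, eval_map_ofReal]
    push_cast
    ring
  have hQev : ∀ᶠ t : ℝ in nhdsWithin 0 {(0:ℝ)}ᶜ,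
      ∑ n ∈ S.erase n₀, (Q n).eval ((t : ℝ) : ℂ)
        * Complex.exp ((n : ℂ) * ((Cp.eval t / Dp.eval t : ℝ) : ℂ) * Complex.I) = 0 := by
    filter_upwards [hyp, hderiv] with t h1 h2
    have hdc : Dc.eval ((t : ℝ) : ℂ) = ((Dp.eval t : ℝ) : ℂ) := eval_map_ofReal Dp t
    have hS3 : ∑ n ∈ S, (Q n).eval ((t : ℝ) : ℂ)
        * Complex.exp ((n : ℂ) * ((Cp.eval t / Dp.eval t : ℝ) : ℂ) * Complex.I) = 0 := by
      have expand : ∀ n ∈ S, (Q n).eval ((t : ℝ) : ℂ)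
          * Complex.exp ((n : ℂ) * ((Cp.eval t / Dp.eval t : ℝ) : ℂ) * Complex.I)
          = (P n₀).eval ((t : ℝ) : ℂ)
              * (((derivative (P n)).eval ((t : ℝ) : ℂ) * ((Dp.eval t : ℝ) : ℂ) ^ 2
                + (n : ℂ) * Complex.I * ((Ep.eval t : ℝ) : ℂ) * (P n).eval ((t : ℝ) : ℂ))
                * Complex.exp ((n : ℂ) * ((Cp.eval t / Dp.eval t : ℝ) : ℂ) * Complex.I))
            - ((derivative (P n₀)).eval ((t : ℝ) : ℂ) * ((Dp.eval t : ℝ) : ℂ) ^ 2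
                + (n₀ : ℂ) * Complex.I * ((Ep.eval t : ℝ) : ℂ) * (P n₀).eval ((t : ℝ) : ℂ))
              * ((P n).eval ((t : ℝ) : ℂ)
                * Complex.exp ((n : ℂ) * ((Cp.eval t / Dp.eval t : ℝ) : ℂ) * Complex.I)) := by
        intro n _
        simp only [hQ_def, eval_add, eval_mul, eval_sub, eval_pow, eval_C, hdc, hEc_eval t]
        ring
      rw [Finset.sum_congr rfl expand, Finset.sum_sub_distrib, ← Finset.mul_sum,
        ← Finset.mul_sum, h1, h2]
      ring
    have herase := Finset.sum_erase_add S (fun n => (Q n).eval ((t : ℝ) : ℂ)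
      * Complex.exp ((n : ℂ) * ((Cp.eval t / Dp.eval t : ℝ) : ℂ) * Complex.I)) hn₀
    rw [← herase] at hS3
    simpa [hQn₀] using hS3
  have hQzero : ∀ n ∈ S.erase n₀, Q n = 0 :=
    ih (S.erase n₀) (Finset.erase_ssubset hn₀) Q hQev
  have hDc_ne : Dc ≠ 0 := (Polynomial.map_ne_zero_iff (algebraMap ℝ ℂ).injective).2 hD
  have hcopc : IsCoprime Cc Dc := hCD.map (mapRingHom (algebraMap ℝ ℂ))
  have hncc : ¬(Cc.natDegree = 0 ∧ Dc.natDegree = 0) := by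
    rwa [hCc_def, hDc_def, natDegree_map_eq_of_injective (algebraMap ℝ ℂ).injective,
      natDegree_map_eq_of_injective (algebraMap ℝ ℂ).injective]
  by_cases hP0 : P n₀ = 0
  · have htail : ∀ᶠ t : ℝ in nhdsWithin 0 {(0:ℝ)}ᶜ,
        ∑ n ∈ S.erase n₀, (P n).eval ((t : ℝ) : ℂ)
          * Complex.exp ((n : ℂ) * ((Cp.eval t / Dp.eval t : ℝ) : ℂ) * Complex.I) = 0 := by
      filter_upwards [hyp] with t h1
      have herase := Finset.sum_erase_add S (fun n => (P n).eval ((t : ℝ) : ℂ)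
        * Complex.exp ((n : ℂ) * ((Cp.eval t / Dp.eval t : ℝ) : ℂ) * Complex.I)) hn₀
      rw [← herase] at h1
      simpa [hP0] using h1
    have hall := ih (S.erase n₀) (Finset.erase_ssubset hn₀) P htail
    intro n hn
    by_cases hnn : n = n₀
    · rwa [hnn]
    · exact hall n (Finset.mem_erase.2 ⟨hnn, hn⟩)
  · have hPn : ∀ n ∈ S.erase n₀, P n = 0 := by
      intro n hn
      by_contra hPn0
      have hkappa : ((n : ℂ) - (n₀ : ℂ)) * Complex.I ≠ 0 := by
        apply mul_ne_zero _ Complex.I_ne_zero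
        rw [sub_ne_zero]
        exact_mod_cast (Finset.mem_erase.1 hn).1
      exact alg_lemma Cc Dc (P n₀) (P n) hDc_ne hcopc hncc hP0 hPn0 _ hkappa (hQzero n hn)
    exfalso
    apply hP0
    apply poly_ev_zero (x₀ := 0)
    have hsingle : ∀ᶠ t : ℝ in nhdsWithin 0 {(0:ℝ)}ᶜ,
        (P n₀).eval ((t : ℝ) : ℂ)
          * Complex.exp ((n₀ : ℂ) * ((Cp.eval t / Dp.eval t : ℝ) : ℂ) * Complex.I) = 0 := by
      filter_upwards [hyp] with t h1
      have herase := Finset.sum_erase_add S (fun n => (P n).eval ((t : ℝ) : ℂ)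
        * Complex.exp ((n : ℂ) * ((Cp.eval t / Dp.eval t : ℝ) : ℂ) * Complex.I)) hn₀
      rw [← herase] at h1
      have hz : ∑ n ∈ S.erase n₀, (P n).eval ((t : ℝ) : ℂ)
          * Complex.exp ((n : ℂ) * ((Cp.eval t / Dp.eval t : ℝ) : ℂ) * Complex.I) = 0 :=
        Finset.sum_eq_zero fun n hn => by rw [hPn n hn]; simp
      rw [hz, zero_add] at h1
      exact h1
    filter_upwards [hsingle] with t ht
    exact (mul_eq_zero.1 ht).resolve_right (Complex.exp_ne_zero _)

noncomputable def polarH (g : MvPolynomial (Fin 2) ℝ) : Polynomial (Polynomial ℂ) :=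
  ∑ m ∈ g.support,
    Polynomial.C (Polynomial.C (((g.coeff m : ℝ) : ℂ)
          * (((2 : ℂ) ^ (m 0) * (2 * Complex.I) ^ (m 1)))⁻¹)
        * Polynomial.X ^ (m 0 + m 1))
      * ((Polynomial.X ^ 2 + 1) ^ (m 0)) * ((Polynomial.X ^ 2 - 1) ^ (m 1))
      * Polynomial.X ^ (g.totalDegree - (m 0 + m 1))


lemma polarH_eval (g : MvPolynomial (Fin 2) ℝ) (ρ φ : ℝ) :
    Polynomial.eval₂ (Polynomial.evalRingHom ((ρ : ℝ) : ℂ))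
        (Complex.exp (((φ : ℝ) : ℂ) * Complex.I)) (polarH g)
      = ((MvPolynomial.eval ![ρ * Real.cos φ, ρ * Real.sin φ] g : ℝ) : ℂ)
        * Complex.exp (((φ : ℝ) : ℂ) * Complex.I) ^ g.totalDegree := by
  set z : ℂ := Complex.exp (((φ : ℝ) : ℂ) * Complex.I) with hz_def
  have hz : z = ((Real.cos φ : ℝ) : ℂ) + ((Real.sin φ : ℝ) : ℂ) * Complex.I := by
    rw [hz_def, Complex.exp_mul_I, Complex.ofReal_cos, Complex.ofReal_sin]
  have hsc : ((Real.sin φ : ℝ) : ℂ) ^ 2 + ((Real.cos φ : ℝ) : ℂ) ^ 2 = 1 := by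
    exact_mod_cast congrArg (fun x : ℝ => (x : ℂ)) (Real.sin_sq_add_cos_sq φ)
  have h1 : z ^ 2 + 1 = 2 * ((Real.cos φ : ℝ) : ℂ) * z := by
    rw [hz]
    linear_combination ((Real.sin φ : ℝ) : ℂ) ^ 2 * Complex.I_sq - hsc
  have h2 : z ^ 2 - 1 = 2 * ((Real.sin φ : ℝ) : ℂ) * Complex.I * z := by
    rw [hz]
    linear_combination (-(((Real.sin φ : ℝ) : ℂ) ^ 2)) * Complex.I_sq + hsc
  rw [polarH, Polynomial.eval₂_finset_sum]
  rw [MvPolynomial.eval_eq']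
  push_cast [Finset.sum_mul]
  refine Finset.sum_congr rfl fun m hm => ?_
  have hjk : m 0 + m 1 ≤ g.totalDegree := by
    have h3 := MvPolynomial.le_totalDegree hm
    have h4 : (m.sum fun _ e => e) = m 0 + m 1 := by
      rw [Finsupp.sum_fintype _ _ (fun _ => rfl), Fin.sum_univ_two]
    omega
  have heval : Polynomial.eval₂ (Polynomial.evalRingHom ((ρ : ℝ) : ℂ)) z
      (Polynomial.C (Polynomial.C (((g.coeff m : ℝ) : ℂ)
          * (((2 : ℂ) ^ (m 0) * (2 * Complex.I) ^ (m 1)))⁻¹)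
        * Polynomial.X ^ (m 0 + m 1))
      * ((Polynomial.X ^ 2 + 1) ^ (m 0)) * ((Polynomial.X ^ 2 - 1) ^ (m 1))
      * Polynomial.X ^ (g.totalDegree - (m 0 + m 1)))
      = (((g.coeff m : ℝ) : ℂ) * (((2 : ℂ) ^ (m 0) * (2 * Complex.I) ^ (m 1)))⁻¹)
        * ((ρ : ℝ) : ℂ) ^ (m 0 + m 1)
        * (z ^ 2 + 1) ^ (m 0) * (z ^ 2 - 1) ^ (m 1) * z ^ (g.totalDegree - (m 0 + m 1)) := by
    simp [Polynomial.eval₂_mul, Polynomial.eval₂_pow, Polynomial.eval₂_add,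
      Polynomial.eval₂_sub, Polynomial.eval₂_one, Polynomial.eval₂_C, Polynomial.eval₂_X,
      mul_assoc]
  rw [heval, h1, h2]
  have hzN : z ^ (m 0) * z ^ (m 1) * z ^ (g.totalDegree - (m 0 + m 1)) = z ^ g.totalDegree := by
    rw [← pow_add, ← pow_add]
    congr 1
    omega
  simp only [Fin.prod_univ_two, Matrix.cons_val_zero, Matrix.cons_val_one, Matrix.head_cons]
  rw [← hzN]
  have h2I : (2 * Complex.I) ^ m 1 ≠ 0 := pow_ne_zero _ (by simp [Complex.I_ne_zero])
  have h2m : (2 : ℂ) ^ m 0 ≠ 0 := pow_ne_zero _ two_ne_zero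
  push_cast
  field_simp
  ring

lemma g_zero_of_polarH (g : MvPolynomial (Fin 2) ℝ) (hH : polarH g = 0) : g = 0 := by
  have hev : ∀ ρ φ : ℝ, MvPolynomial.eval ![ρ * Real.cos φ, ρ * Real.sin φ] g = 0 := by
    intro ρ φ
    have h1 := polarH_eval g ρ φ
    rw [hH, Polynomial.eval₂_zero] at h1
    have h2 := (mul_eq_zero.1 h1.symm).resolve_right
      (pow_ne_zero _ (Complex.exp_ne_zero (((φ : ℝ) : ℂ) * Complex.I)))
    exact_mod_cast h2
  apply MvPolynomial.funext (p := g) (q := 0)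
  intro x
  set u : ℂ := x 0 + x 1 * Complex.I with hu_def
  have habs := Complex.norm_mul_cos_add_sin_mul_I u
  set ρ : ℝ := ‖u‖
  set φ : ℝ := u.arg
  have h' : ((ρ * Real.cos φ : ℝ) : ℂ) + ((ρ * Real.sin φ : ℝ) : ℂ) * Complex.I
      = x 0 + x 1 * Complex.I := by
    calc ((ρ * Real.cos φ : ℝ) : ℂ) + ((ρ * Real.sin φ : ℝ) : ℂ) * Complex.I
        = (ρ : ℂ) * (Complex.cos (φ : ℂ) + Complex.sin (φ : ℂ) * Complex.I) := by
          rw [← Complex.ofReal_cos, ← Complex.ofReal_sin]; push_cast; ring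
      _ = u := habs
      _ = x 0 + x 1 * Complex.I := hu_def.symm ▸ rfl
  rw [Complex.ext_iff] at h'
  obtain ⟨hre, him⟩ := h'
  simp only [Complex.add_re, Complex.ofReal_re, Complex.mul_re, Complex.I_re, Complex.I_im,
    Complex.ofReal_im, Complex.add_im, Complex.mul_im] at hre him
  have h1 : ρ * Real.cos φ = x 0 := by linarith
  have h2 : ρ * Real.sin φ = x 1 := by linarith
  have hxv : ![ρ * Real.cos φ, ρ * Real.sin φ] = x := by
    funext i
    fin_cases i <;> simp [h1, h2]
  rw [← hxv, hev ρ φ]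
  simp


lemma coeff_zero_aux (A B : Polynomial ℝ) (hAB : IsCoprime A B)
    (hr : ¬(A.natDegree = 0 ∧ B.natDegree = 0)) (hB : B ≠ 0) (c : Polynomial ℂ)
    (h0 : ∀ t : ℝ, B.eval t ≠ 0 → c.eval ((A.eval t / B.eval t : ℝ) : ℂ) = 0) : c = 0 := by
  by_contra hc
  have hTinf : {t : ℝ | B.eval t ≠ 0}.Infinite := by
    have h1 := (finite_setOf_isRoot hB).infinite_compl
    exact h1
  have hZfin : {w : ℝ | c.eval ((w : ℝ) : ℂ) = 0}.Finite :=
    Set.Finite.preimage (fun a _ b _ hab => Complex.ofReal_injective hab)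
      (finite_setOf_isRoot hc)
  have hANE : ∀ w : ℝ, A - Polynomial.C w * B ≠ 0 := by
    intro w hw
    have hA : A = Polynomial.C w * B := by linear_combination hw
    obtain ⟨u, v, huv⟩ := hAB
    have hunit : IsUnit B := by
      apply IsUnit.of_mul_eq_one (a := B) (u * Polynomial.C w + v)
      rw [hA] at huv
      linear_combination huv
    have hBdeg : B.natDegree = 0 := natDegree_eq_zero_of_isUnit hunit
    have hAdeg : A.natDegree = 0 := by
      rw [hA]
      have := natDegree_mul_le (p := Polynomial.C w) (q := B)
      simpa [hBdeg] using this
    exact hr ⟨hAdeg, hBdeg⟩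
  have hsub : {t : ℝ | B.eval t ≠ 0} ⊆
      ⋃ w ∈ {w : ℝ | c.eval ((w : ℝ) : ℂ) = 0},
        {t : ℝ | (A - Polynomial.C w * B).eval t = 0} := by
    intro t ht
    refine Set.mem_biUnion (h0 t ht) ?_
    simp only [Set.mem_setOf_eq, eval_sub, eval_mul, eval_C]
    rw [div_mul_cancel₀ _ ht, sub_self]
  have hfin : (⋃ w ∈ {w : ℝ | c.eval ((w : ℝ) : ℂ) = 0},
      {t : ℝ | (A - Polynomial.C w * B).eval t = 0}).Finite :=
    Set.Finite.biUnion hZfin (fun w _ => finite_setOf_isRoot (hANE w))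
  exact hTinf (hfin.subset hsub)

end Auxiliary

/- STATEMENT 0: If r(t) = A(t)/B(t) and θ(t) = C(t)/D(t) are both nonconstant, then the
polar-rational curve is not contained in any real algebraic curve: for every nonzero
g ∈ ℝ[x,y] there is t ∈ Ω with g(r(t)cos(θ(t)), r(t)sin(θ(t))) ≠ 0. -/
theorem polar_rational_not_algebraic
    (A B C D : Polynomial ℝ) (hB : B ≠ 0) (hD : D ≠ 0)
    (hAB : IsCoprime A B) (hCD : IsCoprime C D)
    (hr : ¬ (A.natDegree = 0 ∧ B.natDegree = 0))
    (hθ : ¬ (C.natDegree = 0 ∧ D.natDegree = 0)) :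
    ∀ g : MvPolynomial (Fin 2) ℝ, g ≠ 0 →
      ∃ t : ℝ, B.eval t ≠ 0 ∧ D.eval t ≠ 0 ∧
        MvPolynomial.eval
          ![(A.eval t / B.eval t) * Real.cos (C.eval t / D.eval t),
            (A.eval t / B.eval t) * Real.sin (C.eval t / D.eval t)] g ≠ 0 := by
  intro g hg
  by_contra hcon
  push_neg at hcon
  set H : Polynomial (Polynomial ℂ) := polarH g with hH_def
  set K : ℕ := (Finset.range (H.natDegree + 1)).sup (fun n => (H.coeff n).natDegree)
    with hK_def
  set Ac : Polynomial ℂ := A.map (algebraMap ℝ ℂ) with hAc_def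
  set Bc : Polynomial ℂ := B.map (algebraMap ℝ ℂ) with hBc_def
  set P : ℕ → Polynomial ℂ := fun n => ∑ s ∈ Finset.range (K + 1),
      Polynomial.C ((H.coeff n).coeff s) * Ac ^ s * Bc ^ (K - s) with hP_def
  have hBev : ∀ᶠ t : ℝ in nhdsWithin 0 {(0:ℝ)}ᶜ, B.eval t ≠ 0 := by
    filter_upwards [ev_nmem (finite_setOf_isRoot hB) 0] with t ht
    exact fun h0 => ht h0
  have hDev : ∀ᶠ t : ℝ in nhdsWithin 0 {(0:ℝ)}ᶜ, D.eval t ≠ 0 := by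
    filter_upwards [ev_nmem (finite_setOf_isRoot hD) 0] with t ht
    exact fun h0 => ht h0
  have hPeval : ∀ t : ℝ, B.eval t ≠ 0 → ∀ n ∈ Finset.range (H.natDegree + 1),
      (P n).eval ((t : ℝ) : ℂ) = ((B.eval t : ℝ) : ℂ) ^ K
        * (H.coeff n).eval (((A.eval t / B.eval t : ℝ)) : ℂ) := by
    intro t hBt n hn
    have hdeg : (H.coeff n).natDegree < K + 1 :=
      Nat.lt_succ_of_le (Finset.le_sup (f := fun n => (H.coeff n).natDegree) hn)
    have hx : ((A.eval t / B.eval t : ℝ) : ℂ)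
        = ((A.eval t : ℝ) : ℂ) / ((B.eval t : ℝ) : ℂ) := by push_cast; rfl
    rw [hP_def]
    simp only [Polynomial.eval_finset_sum]
    rw [Polynomial.eval_eq_sum_range' hdeg, hx, Finset.mul_sum]
    refine Finset.sum_congr rfl fun s hs => ?_
    have hsK : s ≤ K := Nat.lt_succ_iff.1 (Finset.mem_range.1 hs)
    rw [eval_mul, eval_mul, eval_C, eval_pow, eval_pow, eval_map_ofReal, eval_map_ofReal]
    have hBne : ((B.eval t : ℝ) : ℂ) ≠ 0 := Complex.ofReal_ne_zero.2 hBt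
    have hsplit : ((B.eval t : ℝ) : ℂ) ^ K
        = ((B.eval t : ℝ) : ℂ) ^ (K - s) * ((B.eval t : ℝ) : ℂ) ^ s := by
      rw [← pow_add]; congr 1; omega
    rw [hsplit, div_pow]
    field_simp
  have hyp : ∀ᶠ t : ℝ in nhdsWithin 0 {(0:ℝ)}ᶜ,
      ∑ n ∈ Finset.range (H.natDegree + 1), (P n).eval ((t : ℝ) : ℂ)
        * Complex.exp ((n : ℂ) * ((C.eval t / D.eval t : ℝ) : ℂ) * Complex.I) = 0 := by
    filter_upwards [hBev, hDev] with t hBt hDt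
    have hg0 := hcon t hBt hDt
    have step1 : ∀ n ∈ Finset.range (H.natDegree + 1),
        (P n).eval ((t : ℝ) : ℂ)
          * Complex.exp ((n : ℂ) * ((C.eval t / D.eval t : ℝ) : ℂ) * Complex.I)
        = ((B.eval t : ℝ) : ℂ) ^ K
            * ((H.coeff n).eval (((A.eval t / B.eval t : ℝ)) : ℂ)
              * Complex.exp (((C.eval t / D.eval t : ℝ) : ℂ) * Complex.I) ^ n) := by
      intro n hn
      rw [hPeval t hBt n hn]
      have hexp : Complex.exp ((n : ℂ) * ((C.eval t / D.eval t : ℝ) : ℂ) * Complex.I)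
          = Complex.exp (((C.eval t / D.eval t : ℝ) : ℂ) * Complex.I) ^ n := by
        rw [mul_assoc, Complex.exp_nat_mul]
      rw [hexp]; ring
    rw [Finset.sum_congr rfl step1, ← Finset.mul_sum]
    have step2 : ∑ n ∈ Finset.range (H.natDegree + 1),
        (H.coeff n).eval (((A.eval t / B.eval t : ℝ)) : ℂ)
          * Complex.exp (((C.eval t / D.eval t : ℝ) : ℂ) * Complex.I) ^ n
        = Polynomial.eval₂ (Polynomial.evalRingHom (((A.eval t / B.eval t : ℝ)) : ℂ))
            (Complex.exp (((C.eval t / D.eval t : ℝ) : ℂ) * Complex.I)) H := by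
      rw [Polynomial.eval₂_eq_sum_range]
      exact Finset.sum_congr rfl fun n _ => rfl
    rw [step2, hH_def, polarH_eval g (A.eval t / B.eval t) (C.eval t / D.eval t), hg0]
    simp
  have hPall := ind_lemma C D hD hCD hθ (Finset.range (H.natDegree + 1)) P hyp
  have hHcoeff : ∀ n, H.coeff n = 0 := by
    intro n
    by_cases hn : n < H.natDegree + 1
    · have hPn := hPall n (Finset.mem_range.2 hn)
      apply coeff_zero_aux A B hAB hr hB
      intro t hBt
      have h1 := hPeval t hBt n (Finset.mem_range.2 hn)
      rw [hPn] at h1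
      simp only [Polynomial.eval_zero] at h1
      have hBne : ((B.eval t : ℝ) : ℂ) ^ K ≠ 0 :=
        pow_ne_zero _ (Complex.ofReal_ne_zero.2 hBt)
      exact ((mul_eq_zero.1 h1.symm).resolve_left hBne)
    · exact coeff_eq_zero_of_natDegree_lt (by omega)
  have hH0 : H = 0 := Polynomial.ext fun n => by rw [hHcoeff n]; simp
  exact hg (g_zero_of_polarH g (hH_def ▸ hH0))
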